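/- arXiv:1703.08569 — 3 statements merged into one kernel-verified Lean document; each statement's English description precedes it below -/
import Mathlib

section
/- Let R be a commutative Noetherian local ring with maximal ideal m and residue field κ = R/m. Let M• be a bounded-above cochain complex of R-modules all of whose terms are finitely generated flat R-modules. If the complex κ ⊗_R M• (with terms κ ⊗_R M^n and differentials id ⊗ d) is exact (acyclic), then M• is exact. -/
open CategoryTheory Limits LinearMap TensorProduct IsLocalRing

theorem aux_key (R : Type) [CommRing R] [IsNoetherianRing R] [IsLocalRing R]
    (A : ℤ → Type) [∀ n, AddCommGroup (A n)] [∀ n, Module R (A n)]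
    (f : ∀ n : ℤ, A n →ₗ[R] A (n+1))
    (hcomp : ∀ n : ℤ, (f (n+1)).comp (f n) = 0)
    (N : ℤ) (hbdd : ∀ n : ℤ, N ≤ n → Subsingleton (A n))
    (hfin : ∀ n, Module.Finite R (A n))
    (hproj : ∀ n, Module.Projective R (A n))
    (htext : ∀ n : ℤ, ∀ y : ResidueField R ⊗[R] (A (n+1)),
       lTensor (ResidueField R) (f (n+1)) y = 0 →
         ∃ x : ResidueField R ⊗[R] (A n), lTensor (ResidueField R) (f n) x = y) :
    ∀ n : ℤ, ker (f (n+1)) = range (f n) := by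
  set P : ℤ → Prop := fun n => ker (f (n+1)) = range (f n) ∧ Module.Projective R (ker (f (n+1)))
    with hP
  have hrange : ∀ n : ℤ, range (f n) ≤ ker (f (n+1)) := by
    rintro n _ ⟨a, rfl⟩
    exact LinearMap.ext_iff.mp (hcomp n) a
  have base : ∀ n : ℤ, N - 1 ≤ n → P n := by
    intro n hn
    have h1 : Subsingleton (A (n+1)) := hbdd _ (by omega)
    have h2 : Subsingleton (A (n+1+1)) := hbdd _ (by omega)
    refine ⟨?_, inferInstance⟩
    ext x
    simp only [LinearMap.mem_ker, LinearMap.mem_range]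
    constructor
    · intro _
      exact ⟨0, Subsingleton.elim _ _⟩
    · intro _
      exact Subsingleton.elim _ _
  have step : ∀ n : ℤ, P (n+1) → P n := by
    intro n hPn
    obtain ⟨heq, hprojZ⟩ := hPn
    haveI := hfin (n+1)
    haveI := hproj (n+1)
    haveI : IsNoetherian R (A (n+1)) := isNoetherian_of_isNoetherianRing_of_finite R (A (n+1))
    let p : A (n+1) →ₗ[R] ker (f (n+1+1)) :=
      (f (n+1)).codRestrict (ker (f (n+1+1))) (fun a => hrange (n+1) ⟨a, rfl⟩)
    have hpsurj : Function.Surjective p := by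
      rintro ⟨x, hx⟩
      rw [heq] at hx
      obtain ⟨a, ha⟩ := hx
      exact ⟨a, Subtype.ext ha⟩
    haveI : Module.Projective R (ker (f (n+1+1))) := hprojZ
    obtain ⟨s, hs⟩ := Module.projective_lifting_property p LinearMap.id hpsurj
    set r : A (n+1) →ₗ[R] A (n+1) := LinearMap.id - s ∘ₗ p with hr
    have hpr : ∀ a, p (r a) = 0 := by
      intro a
      have h2 : p (s (p a)) = p a := LinearMap.ext_iff.mp hs (p a)
      simp [hr, h2]
    have hrker : ∀ a, f (n+1) (r a) = 0 := by
      intro a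
      have h3 := congrArg Subtype.val (hpr a)
      simpa [p, LinearMap.codRestrict_apply] using h3
    have hrid : ∀ a, a ∈ ker (f (n+1)) → r a = a := by
      intro a ha
      have hpa : p a = 0 := Subtype.ext ha
      simp [hr, hpa]
    let r' : A (n+1) →ₗ[R] ker (f (n+1)) := r.codRestrict (ker (f (n+1))) (fun a => hrker a)
    have hprojK : Module.Projective R (ker (f (n+1))) := by
      refine Module.Projective.of_split (ker (f (n+1))).subtype r' ?_
      ext x
      exact hrid x.1 x.2
    have hKfg : (ker (f (n+1))).FG := IsNoetherian.noetherian _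
    have hle : ker (f (n+1)) ≤ range (f n) ⊔ (maximalIdeal R) • (ker (f (n+1))) := by
      intro x hx
      obtain ⟨y, hy⟩ := htext n (1 ⊗ₜ x) (by
        rw [lTensor_tmul, LinearMap.mem_ker.mp hx, tmul_zero])
      set J := range (f n) ⊔ (maximalIdeal R) • (⊤ : Submodule R (A (n+1))) with hJ
      let b : R →ₗ[R] (A (n+1) →ₗ[R] (A (n+1) ⧸ J)) := LinearMap.toSpanSingleton R _ J.mkQ
      have hbker : maximalIdeal R ≤ ker b := by
        intro c hc
        rw [LinearMap.mem_ker]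
        ext a
        have h4 : c • a ∈ J := Submodule.mem_sup_right (Submodule.smul_mem_smul hc Submodule.mem_top)
        simp only [b, LinearMap.toSpanSingleton_apply, LinearMap.smul_apply, LinearMap.zero_apply,
          Submodule.mkQ_apply, ← Submodule.Quotient.mk_smul]
        exact (Submodule.Quotient.mk_eq_zero _).mpr h4
      let ψ : ResidueField R ⊗[R] A (n+1) →ₗ[R] A (n+1) ⧸ J :=
        TensorProduct.lift ((maximalIdeal R).liftQ b hbker)
      have hψf : ψ ∘ₗ lTensor (ResidueField R) (f n) = 0 := by
        apply TensorProduct.ext'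
        intro c a
        obtain ⟨cr, rfl⟩ := Ideal.Quotient.mk_surjective c
        have h3 : f n a ∈ J := Submodule.mem_sup_left ⟨a, rfl⟩
        simp only [LinearMap.comp_apply, lTensor_tmul, LinearMap.zero_apply, ψ,
          TensorProduct.lift.tmul, ← Ideal.Quotient.mk_eq_mk, Submodule.liftQ_apply, b,
          LinearMap.toSpanSingleton_apply, LinearMap.smul_apply, Submodule.mkQ_apply,
          ← Submodule.Quotient.mk_smul]
        exact (Submodule.Quotient.mk_eq_zero _).mpr (Submodule.smul_mem _ _ h3)
      have h1x : J.mkQ x = 0 := by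
        have hψ1 : ψ ((1 : ResidueField R) ⊗ₜ x) = J.mkQ x := by
          have h5 : (1 : ResidueField R) = Ideal.Quotient.mk _ (1 : R) := (map_one _).symm
          rw [h5]
          show TensorProduct.lift ((maximalIdeal R).liftQ b hbker) (_ ⊗ₜ x) = _
          rw [TensorProduct.lift.tmul, ← Ideal.Quotient.mk_eq_mk, Submodule.liftQ_apply]
          simp [b]
        rw [← hψ1, ← hy]
        exact LinearMap.ext_iff.mp hψf y
      have hmem : x ∈ J := by
        rwa [Submodule.mkQ_apply, Submodule.Quotient.mk_eq_zero] at h1x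
      obtain ⟨u, hu, z, hz, huz⟩ := Submodule.mem_sup.mp hmem
      obtain ⟨a, ha⟩ := hu
      have hzK : z ∈ ker (f (n+1)) := by
        rw [LinearMap.mem_ker]
        have h6 : z = x - f n a := by rw [← huz, ha]; abel
        rw [h6, map_sub, LinearMap.mem_ker.mp hx,
          LinearMap.mem_ker.mp (hrange n ⟨a, rfl⟩), sub_zero]
      have hzmK : z ∈ (maximalIdeal R) • (ker (f (n+1))) := by
        have h3 : r' z ∈ (maximalIdeal R) • (⊤ : Submodule R (ker (f (n+1)))) := by
          have h7 := Submodule.mem_map_of_mem (f := r') hz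
          rw [Submodule.map_smul''] at h7
          exact (smul_mono_right (maximalIdeal R) le_top :
            _ ≤ (maximalIdeal R) • (⊤ : Submodule R (ker (f (n+1))))) h7
        have h4 := Submodule.mem_map_of_mem (f := (ker (f (n+1))).subtype) h3
        rw [Submodule.map_smul'', Submodule.map_subtype_top] at h4
        have h5 : (ker (f (n+1))).subtype (r' z) = z := by
          exact hrid z hzK
        rwa [h5] at h4
      rw [← huz]
      exact Submodule.add_mem _ (Submodule.mem_sup_left ⟨a, ha⟩) (Submodule.mem_sup_right hzmK)
    have hKle : ker (f (n+1)) ≤ range (f n) :=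
      Submodule.le_of_le_smul_of_le_jacobson_bot hKfg
        (le_of_eq (IsLocalRing.jacobson_eq_maximalIdeal ⊥ bot_ne_top).symm) hle
    exact ⟨le_antisymm hKle (hrange n), hprojK⟩
  have main : ∀ (k : ℕ) (n : ℤ), N - 1 - k ≤ n → P n := by
    intro k
    induction k with
    | zero => intro n hn; exact base n (by omega)
    | succ k ih =>
      intro n hn
      by_cases h : N - 1 - k ≤ n
      · exact ih n h
      · exact step n (ih (n+1) (by omega))
  intro n
  exact (main (N - 1 - n).toNat n (by omega)).1


/-- Let `R` be a commutative Noetherian local ring with residue field `κ`.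
If `M` is a bounded-above cochain complex of finitely generated flat `R`-modules such that
`κ ⊗_R M` is acyclic, then `M` is acyclic. -/
theorem stmt_0 (R : Type) [CommRing R] [IsNoetherianRing R] [IsLocalRing R]
    (M : CochainComplex (ModuleCat R) ℤ)
    (hbdd : ∃ N : ℤ, ∀ n : ℤ, N ≤ n → IsZero (M.X n))
    (hfin : ∀ n : ℤ, Module.Finite R (M.X n))
    (hflat : ∀ n : ℤ, Module.Flat R (M.X n))
    (hexact : ∀ n : ℤ,
      ((((MonoidalCategory.tensorLeft
          (ModuleCat.of R (IsLocalRing.ResidueField R))).mapHomologicalComplex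
          (ComplexShape.up ℤ)).obj M).ExactAt n)) :
    ∀ n : ℤ, M.ExactAt n := by
  obtain ⟨N, hN⟩ := hbdd
  have hsub : ∀ n : ℤ, N ≤ n → Subsingleton (M.X n) := by
    intro n hn
    have h := hN n hn
    have h0 : ∀ a : M.X n, a = 0 := by
      intro a
      have h1 : (𝟙 (M.X n) : M.X n ⟶ M.X n) = 0 := h.eq_of_src _ _
      simpa using congrArg (fun g : M.X n ⟶ M.X n => g.hom a) h1
    exact ⟨fun a b => by rw [h0 a, h0 b]⟩
  have hproj : ∀ n : ℤ, Module.Projective R (M.X n) := by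
    intro n
    haveI := hfin n; haveI := hflat n
    haveI : Module.FinitePresentation R (M.X n) := Module.finitePresentation_of_finite R _
    haveI : Module.Free R (M.X n) := Module.free_of_flat_of_isLocalRing
    infer_instance
  have hcomp : ∀ n : ℤ, (M.d (n+1) (n+1+1)).hom.comp
      (M.d n (n+1)).hom = 0 := by
    intro n
    exact congrArg ModuleCat.Hom.hom (M.d_comp_d n (n+1) (n+1+1))
  have htext : ∀ n : ℤ, ∀ y : IsLocalRing.ResidueField R ⊗[R] (M.X (n+1)),
      LinearMap.lTensor (IsLocalRing.ResidueField R) (M.d (n+1) (n+1+1)).hom y = 0 →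
      ∃ x : IsLocalRing.ResidueField R ⊗[R] (M.X n),
        LinearMap.lTensor (IsLocalRing.ResidueField R) (M.d n (n+1)).hom x = y := by
    intro n y hy
    have h := hexact (n+1)
    rw [HomologicalComplex.exactAt_iff' _ n (n+1) (n+1+1)
      (by simp [CochainComplex.prev]) (by simp [CochainComplex.next])] at h
    rw [ShortComplex.moduleCat_exact_iff] at h
    exact h y hy
  have key := aux_key R (fun n => M.X n) (fun n => (M.d n (n+1)).hom) hcomp N hsub hfin hproj htext
  intro m
  obtain ⟨n, rfl⟩ : ∃ n : ℤ, m = n + 1 := ⟨m - 1, by omega⟩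
  rw [HomologicalComplex.exactAt_iff' _ n (n+1) (n+1+1)
    (by simp [CochainComplex.prev]) (by simp [CochainComplex.next])]
  rw [ShortComplex.moduleCat_exact_iff_range_eq_ker]
  exact (key n).symm
end

section
/- Let k be a field, Λ a finite-dimensional k-algebra, R a commutative Artinian local k-algebra with maximal ideal m_R, and A = R ⊗_k Λ. Let f : M• → N• be a chain map between bounded-above cochain complexes of A-modules all of whose terms are finite-rank free A-modules. If the induced chain map between the reductions of M• and N• modulo m_R is a quasi-isomorphism, then f is a quasi-isomorphism. -/
open CategoryTheory

/-- The reduction-mod-`I` functor on modules over a ring `A`, sending `M` to `M ⧸ I·M`.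
For `A = R ⊗_k Λ` and `I` the ideal generated by the image of `m_R`, this is
reduction modulo `m_R`. -/
noncomputable def modIdealFunctor (A : Type) [Ring A] (I : Ideal A) :
    ModuleCat A ⥤ ModuleCat A where
  obj M := ModuleCat.of A (M ⧸ (I • (⊤ : Submodule A M)))
  map {M N} f := ModuleCat.ofHom (Submodule.mapQ _ _ f.hom (by
    rw [← Submodule.map_le_iff_le_comap, Submodule.map_smul'']
    exact Submodule.smul_mono le_rfl le_top))
  map_id M := by
    apply ModuleCat.hom_ext
    apply Submodule.linearMap_qext
    ext x
    rfl
  map_comp f g := by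
    apply ModuleCat.hom_ext
    apply Submodule.linearMap_qext
    ext x
    rfl

instance (A : Type) [Ring A] (I : Ideal A) : (modIdealFunctor A I).Additive where
  map_add {X Y f g} := by
    apply ModuleCat.hom_ext
    apply Submodule.linearMap_qext
    ext x
    rfl

/-! ### Auxiliary material -/

universe v u

section ItSmul

/-- Iterated smul of an ideal on a submodule. -/
def itSmul {A M : Type*} [Ring A] [AddCommGroup M] [Module A M] (I : Ideal A) :
    ℕ → Submodule A M → Submodule A M
  | 0, S => S
  | (t+1), S => I • itSmul I t S

lemma itSmul_mono {A M : Type*} [Ring A] [AddCommGroup M] [Module A M] (I : Ideal A)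
    (t : ℕ) {S T : Submodule A M} (h : S ≤ T) : itSmul I t S ≤ itSmul I t T := by
  induction t with
  | zero => exact h
  | succ t ih => exact Submodule.smul_mono le_rfl ih

lemma itSmul_sup {A M : Type*} [Ring A] [AddCommGroup M] [Module A M] (I : Ideal A)
    (t : ℕ) (S T : Submodule A M) : itSmul I t (S ⊔ T) = itSmul I t S ⊔ itSmul I t T := by
  induction t with
  | zero => rfl
  | succ t ih => simp only [itSmul, ih, Submodule.smul_sup]

lemma itSmul_le_self {A M : Type*} [Ring A] [AddCommGroup M] [Module A M] (I : Ideal A)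
    (t : ℕ) (S : Submodule A M) : itSmul I t S ≤ S := by
  induction t with
  | zero => exact le_rfl
  | succ t ih => exact le_trans Submodule.smul_le_right ih

lemma itSmul_smul {A M : Type*} [Ring A] [AddCommGroup M] [Module A M] (I : Ideal A)
    (t : ℕ) (S : Submodule A M) : itSmul I t (I • S) = I • itSmul I t S := by
  induction t with
  | zero => rfl
  | succ t ih => simp only [itSmul, ih]

/-- Nakayama-type lemma for "nilpotent" ideals, in iterated-smul form. -/
lemma nak {A M : Type*} [Ring A] [AddCommGroup M] [Module A M] (I : Ideal A)
    {S T : Submodule A M} (h : S ≤ T ⊔ I • S) {N : ℕ} (hN : itSmul I N S = ⊥) : S ≤ T := by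
  have key : ∀ t : ℕ, S ≤ T ⊔ itSmul I t S := by
    intro t
    induction t with
    | zero => exact le_sup_right
    | succ t ih =>
        refine le_trans ih (sup_le le_sup_left ?_)
        have h1 : itSmul I t S ≤ itSmul I t (T ⊔ I • S) := itSmul_mono I t h
        rw [itSmul_sup, itSmul_smul] at h1
        refine le_trans h1 (sup_le ?_ ?_)
        · exact le_trans (itSmul_le_self I t T) le_sup_left
        · exact le_sup_right
  have := key N
  rwa [hN, sup_bot_eq] at this

lemma mul_mem_map {R A : Type*} [CommRing R] [Ring A] [Algebra R A]
    (J1 J2 : Ideal R) {a b : A} (ha : a ∈ J1.map (algebraMap R A))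
    (hb : b ∈ J2.map (algebraMap R A)) : a * b ∈ (J1 * J2).map (algebraMap R A) := by
  rw [Ideal.map] at ha
  refine Submodule.span_induction ?_ ?_ ?_ ?_ ha
  · rintro x ⟨r, hr, rfl⟩
    rw [Ideal.map] at hb ⊢
    refine Submodule.span_induction ?_ ?_ ?_ ?_ hb
    · rintro y ⟨s, hs, rfl⟩
      exact Submodule.subset_span ⟨r * s, Ideal.mul_mem_mul hr hs, by rw [map_mul]⟩
    · simp
    · intro y z _ _ hy hz
      rw [mul_add]; exact Submodule.add_mem _ hy hz
    · intro c y _ hy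
      rw [smul_eq_mul, ← mul_assoc, Algebra.commutes r c, mul_assoc]
      exact Submodule.smul_mem _ c hy
  · simp
  · intro x y _ _ hx hy
    rw [add_mul]; exact Submodule.add_mem _ hx hy
  · intro c x _ hx
    rw [smul_eq_mul, mul_assoc]
    exact Submodule.smul_mem _ c hx

lemma itSmul_le_map_pow {R A M : Type*} [CommRing R] [Ring A] [Algebra R A]
    [AddCommGroup M] [Module A M] (J : Ideal R) (t : ℕ) (S : Submodule A M) :
    itSmul (J.map (algebraMap R A)) t S ≤ ((J ^ t).map (algebraMap R A)) • S := by
  induction t with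
  | zero =>
      simp only [itSmul, pow_zero, Ideal.one_eq_top, Ideal.map_top, Submodule.top_smul]
      exact le_rfl
  | succ t ih =>
      refine le_trans (Submodule.smul_mono le_rfl ih) ?_
      rw [Submodule.smul_le]
      intro a ha x hx
      refine Submodule.smul_induction_on hx ?_ ?_
      · intro b hb s hs
        rw [← mul_smul]
        exact Submodule.smul_mem_smul
          (by rw [pow_succ, mul_comm]; exact mul_mem_map J (J^t) ha hb) hs
      · intro y z hy hz
        rw [smul_add]; exact Submodule.add_mem _ hy hz

lemma itSmul_eq_bot {R A M : Type*} [CommRing R] [Ring A] [Algebra R A]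
    [AddCommGroup M] [Module A M] {J : Ideal R} {N : ℕ} (hJ : J ^ N = ⊥)
    (S : Submodule A M) : itSmul (J.map (algebraMap R A)) N S = ⊥ := by
  refine le_antisymm (le_trans (itSmul_le_map_pow J N S) ?_) bot_le
  rw [hJ, Ideal.map_bot, Submodule.bot_smul]

end ItSmul

section Core

variable {A : Type u} [Ring A]

/-- The inductive invariant: the kernel of the differential at `j` is a linear retract of
`X j`, and exactness-mod-`I` holds at spot `j` "relative to the kernel". -/
def cInv (I : Ideal A) (K : CochainComplex (ModuleCat.{v} A) ℤ) (j : ℤ) : Prop :=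
  (∃ ρ : K.X j →ₗ[A] K.X j,
      LinearMap.range ρ ≤ LinearMap.ker (K.d j (j+1)).hom ∧
      ∀ x ∈ LinearMap.ker (K.d j (j+1)).hom, ρ x = x) ∧
  ∀ i : ℤ, i + 1 = j →
    LinearMap.ker (K.d j (j+1)).hom ≤
      LinearMap.range (K.d i j).hom ⊔ I • (LinearMap.ker (K.d j (j+1)).hom)

lemma cInv_of_subsingleton (I : Ideal A) (K : CochainComplex (ModuleCat.{v} A) ℤ) (j : ℤ)
    (h : Subsingleton (K.X j)) : cInv I K j := by
  constructor
  · exact ⟨0, by rw [LinearMap.range_zero]; exact bot_le,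
      fun x _ => Subsingleton.elim _ _⟩
  · intro i _ x _
    have : x = 0 := Subsingleton.elim _ _
    rw [this]; exact Submodule.zero_mem _

lemma d_d_zero (K : CochainComplex (ModuleCat.{v} A) ℤ) (i j k : ℤ) (x : K.X i) :
    K.d j k (K.d i j x) = 0 := by
  show (K.d i j ≫ K.d j k) x = 0
  rw [K.d_comp_d]; rfl

lemma cInv_step (I : Ideal A) (K : CochainComplex (ModuleCat.{v} A) ℤ) {NN : ℕ}
    (hNil : ∀ (M : Type v) [AddCommGroup M] [Module A M] (S : Submodule A M), itSmul I NN S = ⊥)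
    (hproj : ∀ n : ℤ, Module.Projective A (K.X n))
    (hq : ∀ (i j : ℤ), i + 1 = j → ∀ x : K.X j,
        K.d j (j+1) x ∈ I • (⊤ : Submodule A (K.X (j+1))) →
        x ∈ LinearMap.range (K.d i j).hom ⊔ I • (⊤ : Submodule A (K.X j)))
    (j : ℤ) (h : cInv I K (j+1)) : cInv I K j := by
  obtain ⟨⟨ρ, hρrange, hρid⟩, h2⟩ := h
  set Kj1 : Submodule A (K.X (j+1)) := LinearMap.ker (K.d (j+1) (j+1+1)).hom with hKj1
  have hexact : Kj1 ≤ LinearMap.range (K.d j (j+1)).hom :=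
    nak I (h2 j rfl) (hNil (K.X (j+1)) Kj1)
  have hprojKj1 : Module.Projective A Kj1 := by
    have : Module.Projective A (K.X (j+1)) := hproj (j+1)
    refine Module.Projective.of_split Kj1.subtype
      (ρ.codRestrict Kj1 (fun x => hρrange ⟨x, rfl⟩)) ?_
    ext ⟨x, hx⟩
    exact hρid x hx
  have hdd : ∀ x : K.X j, K.d j (j+1) x ∈ Kj1 := fun x => d_d_zero K j (j+1) (j+1+1) x
  set D : K.X j →ₗ[A] Kj1 := LinearMap.codRestrict Kj1 (K.d j (j+1)).hom hdd with hD
  have hDcoe : ∀ x : K.X j, (D x : K.X (j+1)) = K.d j (j+1) x := fun _ => rfl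
  have hDsurj : Function.Surjective D := by
    rintro ⟨x, hx⟩
    obtain ⟨y, hy⟩ := hexact hx
    exact ⟨y, Subtype.ext hy⟩
  obtain ⟨σ, hσ⟩ := Module.projective_lifting_property D LinearMap.id hDsurj
  have hσ' : ∀ z : Kj1, D (σ z) = z := fun z => congrArg (fun g => g z) hσ
  set ρj : K.X j →ₗ[A] K.X j := LinearMap.id - (σ ∘ₗ D) with hρj
  have hρjval : ∀ x : K.X j, ρj x = x - σ (D x) := fun x => rfl
  have hrange : LinearMap.range ρj ≤ LinearMap.ker (K.d j (j+1)).hom := by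
    rintro _ ⟨x, rfl⟩
    show K.d j (j+1) (ρj x) = 0
    rw [hρjval, map_sub]
    have : K.d j (j+1) ((σ (D x) : K.X j)) = ((D (σ (D x)) : Kj1) : K.X (j+1)) := rfl
    rw [this, hσ' (D x), hDcoe, sub_self]
  have hid : ∀ x ∈ LinearMap.ker (K.d j (j+1)).hom, ρj x = x := by
    intro x hx
    have hDx : D x = 0 := Subtype.ext (by rw [hDcoe]; exact hx)
    rw [hρjval, hDx, map_zero, sub_zero]
  constructor
  · exact ⟨ρj, hrange, hid⟩
  · intro i hi x hx
    have h0 : K.d j (j+1) x ∈ I • (⊤ : Submodule A (K.X (j+1))) := by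
      rw [show K.d j (j+1) x = 0 from hx]
      exact Submodule.zero_mem _
    have hsup := hq i j hi x h0
    rw [Submodule.mem_sup] at hsup
    obtain ⟨y, hy, v, hv, hxyv⟩ := hsup
    obtain ⟨w, rfl⟩ := hy
    have hxρ : x = K.d i j w + ρj v := by
      have h1 : ρj x = x := hid x hx
      have h2' : ρj (K.d i j w) = K.d i j w :=
        hid _ (by show K.d j (j+1) (K.d i j w) = 0; exact d_d_zero K i j (j+1) w)
      calc x = ρj x := h1.symm
        _ = ρj (K.d i j w + v) := by rw [hxyv]
        _ = ρj (K.d i j w) + ρj v := map_add _ _ _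
        _ = K.d i j w + ρj v := by rw [h2']
    have hρv : ρj v ∈ I • (LinearMap.ker (K.d j (j+1)).hom) := by
      have hmem : ρj v ∈ Submodule.map ρj (I • (⊤ : Submodule A (K.X j))) :=
        Submodule.mem_map_of_mem hv
      rw [Submodule.map_smul''] at hmem
      refine Submodule.smul_mono le_rfl ?_ hmem
      rw [Submodule.map_top]
      exact hrange
    rw [Submodule.mem_sup]
    exact ⟨K.d i j w, ⟨w, rfl⟩, ρj v, hρv, hxρ.symm⟩

/-- The core algebraic statement: a bounded-above cochain complex of projective modules
whose reduction mod `I` (for `I` "nilpotent") is acyclic is itself acyclic. -/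
lemma core_exact (I : Ideal A) (K : CochainComplex (ModuleCat.{v} A) ℤ) {NN : ℕ}
    (hNil : ∀ (M : Type v) [AddCommGroup M] [Module A M] (S : Submodule A M), itSmul I NN S = ⊥)
    (hproj : ∀ n : ℤ, Module.Projective A (K.X n))
    (hbdd : ∃ a : ℤ, ∀ n : ℤ, a ≤ n → Subsingleton (K.X n))
    (hq : ∀ (i j : ℤ), i + 1 = j → ∀ x : K.X j,
        K.d j (j+1) x ∈ I • (⊤ : Submodule A (K.X (j+1))) →
        x ∈ LinearMap.range (K.d i j).hom ⊔ I • (⊤ : Submodule A (K.X j))) :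
    ∀ (i j : ℤ), i + 1 = j → ∀ x : K.X j, K.d j (j+1) x = 0 → ∃ y, K.d i j y = x := by
  obtain ⟨a, ha⟩ := hbdd
  have key : ∀ t : ℕ, ∀ j : ℤ, a - t ≤ j → cInv I K j := by
    intro t
    induction t with
    | zero =>
        intro j hj
        exact cInv_of_subsingleton I K j (ha j (by omega))
    | succ t ih =>
        intro j hj
        by_cases hc : a - t ≤ j
        · exact ih j hc
        · exact cInv_step I K hNil hproj hq j (ih (j+1) (by omega))
  have hall : ∀ j : ℤ, cInv I K j := fun j => key (a - j).toNat j (by omega)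
  intro i j hij x hx
  have hker : LinearMap.ker (K.d j (j+1)).hom ≤ LinearMap.range (K.d i j).hom :=
    nak I ((hall j).2 i hij) (hNil (K.X j) _)
  exact hker hx

end Core

section Glue

open CategoryTheory Limits

lemma quasiIso_iff_mappingCone_exact {C : Type*} [Category C] [Abelian C]
    {K L : CochainComplex C ℤ} (φ : K ⟶ L) :
    QuasiIso φ ↔ ∀ n : ℤ, (CochainComplex.mappingCone φ).ExactAt n := by
  rw [← HomologicalComplex.mem_quasiIso_iff,
    ← HomotopyCategory.quotient_map_mem_quasiIso_iff,
    HomotopyCategory.quasiIso_eq_subcategoryAcyclic_W,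
    ← HomotopyCategory.quotient_obj_mem_subcategoryAcyclic_iff_exactAt]
  exact ObjectProperty.trW_iff_of_distinguished _ _
    (HomotopyCategory.mappingCone_triangleh_distinguished φ)

lemma exactAt_of_iso {C : Type*} [Category C] [Abelian C] {ι : Type*} {c : ComplexShape ι}
    {K L : HomologicalComplex C c} (e : K ≅ L) (n : ι) (h : L.ExactAt n) : K.ExactAt n := by
  rw [HomologicalComplex.exactAt_iff_isZero_homology] at h ⊢
  exact h.of_iso ((HomologicalComplex.homologyFunctor C c n).mapIso e)

lemma subsingleton_of_isZero {S : Type u} [Ring S] {X : ModuleCat.{v} S} (h : Limits.IsZero X) :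
    Subsingleton X :=
  ((h.iso (ModuleCat.isZero_of_subsingleton
    (ModuleCat.of S PUnit))).toLinearEquiv.toEquiv.subsingleton)

end Glue

/-- Let `k` be a field, `Λ` a finite-dimensional `k`-algebra, `R` a commutative
Artinian local `k`-algebra with maximal ideal `m_R`, and `A = R ⊗_k Λ`. If `f : M ⟶ N` is a
chain map between bounded-above cochain complexes of finite-rank free `A`-modules whose
reduction modulo `m_R` is a quasi-isomorphism, then `f` is a quasi-isomorphism. -/
theorem stmt_1 (k : Type) [Field k] (Λ : Type) [Ring Λ] [Algebra k Λ] [FiniteDimensional k Λ]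
    (R : Type) [CommRing R] [IsArtinianRing R] [IsLocalRing R] [Algebra k R]
    (M N : CochainComplex (ModuleCat (TensorProduct k R Λ)) ℤ) (f : M ⟶ N)
    (hMbdd : ∃ a : ℤ, ∀ n : ℤ, a ≤ n → Limits.IsZero (M.X n))
    (hNbdd : ∃ a : ℤ, ∀ n : ℤ, a ≤ n → Limits.IsZero (N.X n))
    (hMfree : ∀ n : ℤ, Module.Free (TensorProduct k R Λ) (M.X n))
    (hMfin : ∀ n : ℤ, Module.Finite (TensorProduct k R Λ) (M.X n))
    (hNfree : ∀ n : ℤ, Module.Free (TensorProduct k R Λ) (N.X n))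
    (hNfin : ∀ n : ℤ, Module.Finite (TensorProduct k R Λ) (N.X n))
    (hred : QuasiIso (((modIdealFunctor (TensorProduct k R Λ)
        ((IsLocalRing.maximalIdeal R).map
          (algebraMap R (TensorProduct k R Λ)))).mapHomologicalComplex
        (ComplexShape.up ℤ)).map f)) :
    QuasiIso f := by
  classical
  set A := TensorProduct k R Λ with hA
  set I : Ideal A := (IsLocalRing.maximalIdeal R).map (algebraMap R A) with hI
  set F := modIdealFunctor A I with hF
  set Cn := CochainComplex.mappingCone f with hCn
  -- nilpotency of the maximal ideal
  obtain ⟨NN, hNN⟩ : IsNilpotent (IsLocalRing.maximalIdeal R) := by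
    have h := IsArtinianRing.isNilpotent_jacobson_bot (R := R)
    rwa [IsLocalRing.jacobson_eq_maximalIdeal ⊥ bot_ne_top] at h
  have hNN' : (IsLocalRing.maximalIdeal R) ^ NN = ⊥ := hNN
  -- reduction of the mapping cone is exact
  have hredEx : ∀ n : ℤ, (CochainComplex.mappingCone
      ((F.mapHomologicalComplex (ComplexShape.up ℤ)).map f)).ExactAt n :=
    (quasiIso_iff_mappingCone_exact _).1 hred
  have hGEx : ∀ n : ℤ, ((F.mapHomologicalComplex (ComplexShape.up ℤ)).obj Cn).ExactAt n :=
    fun n => exactAt_of_iso (CochainComplex.mappingCone.mapHomologicalComplexIso f F) n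
      (hredEx n)
  -- element-level exactness-mod-I for the cone
  have hq : ∀ (i j : ℤ), i + 1 = j → ∀ x : Cn.X j,
      Cn.d j (j+1) x ∈ I • (⊤ : Submodule A (Cn.X (j+1))) →
      x ∈ LinearMap.range (Cn.d i j).hom ⊔ I • (⊤ : Submodule A (Cn.X j)) := by
    intro i j hij x hdx
    have r1 : (ComplexShape.up ℤ).Rel j (j+1) := rfl
    have r2 : (ComplexShape.up ℤ).Rel i j := hij
    set G := (F.mapHomologicalComplex (ComplexShape.up ℤ)).obj Cn with hG
    have hex := hGEx j
    rw [G.exactAt_iff' _ _ _ ((ComplexShape.up ℤ).prev_eq' r2) ((ComplexShape.up ℤ).next_eq' r1),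
      ShortComplex.moduleCat_exact_iff] at hex
    have hz : G.d j (j+1) (Submodule.Quotient.mk x) = 0 := by
      have e2 : G.d j (j+1) (Submodule.Quotient.mk x)
          = (Submodule.Quotient.mk (Cn.d j (j+1) x) :
              Cn.X (j+1) ⧸ (I • (⊤ : Submodule A (Cn.X (j+1))))) := rfl
      rw [e2, (Submodule.Quotient.mk_eq_zero _).2 hdx]; rfl
    obtain ⟨w, hw⟩ := hex (Submodule.Quotient.mk x) hz
    obtain ⟨y, hy⟩ := Submodule.Quotient.mk_surjective _ w
    have e4 : G.d i j w = (Submodule.Quotient.mk (Cn.d i j y) :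
        Cn.X j ⧸ (I • (⊤ : Submodule A (Cn.X j)))) := by rw [← hy]; rfl
    have e5 : (Submodule.Quotient.mk (Cn.d i j y) :
        Cn.X j ⧸ (I • (⊤ : Submodule A (Cn.X j)))) = Submodule.Quotient.mk x := by
      rw [← e4]; exact hw
    rw [Submodule.Quotient.eq] at e5
    rw [Submodule.mem_sup]
    refine ⟨Cn.d i j y, ⟨y, rfl⟩, x - Cn.d i j y, ?_, by abel⟩
    have hneg := Submodule.neg_mem _ e5
    rwa [neg_sub] at hneg
  -- projectivity of the cone terms
  have hproj : ∀ n : ℤ, Module.Projective A (Cn.X n) := by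
    intro n
    haveI := hMfree (n+1)
    haveI := hNfree n
    have e : Cn.X n ≅ ModuleCat.of A ((M.X (n+1)) × (N.X n)) :=
      (HomologicalComplex.homotopyCofiber.XIsoBiprod f n (n+1) rfl) ≪≫
        ModuleCat.biprodIsoProd _ _
    have h2 : ((M.X (n+1)) × (N.X n)) ≃ₗ[A] Cn.X n := e.symm.toLinearEquiv
    exact Module.Projective.of_equiv h2
  -- boundedness of the cone
  have hbdd : ∃ a : ℤ, ∀ n : ℤ, a ≤ n → Subsingleton (Cn.X n) := by
    obtain ⟨aM, haM⟩ := hMbdd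
    obtain ⟨aN, haN⟩ := hNbdd
    refine ⟨max aM aN, fun n hn => ?_⟩
    have e : Cn.X n ≅ ModuleCat.of A ((M.X (n+1)) × (N.X n)) :=
      (HomologicalComplex.homotopyCofiber.XIsoBiprod f n (n+1) rfl) ≪≫
        ModuleCat.biprodIsoProd _ _
    haveI : Subsingleton (M.X (n+1)) :=
      subsingleton_of_isZero (haM (n+1) (le_trans (le_trans (le_max_left _ _) hn) (by omega)))
    haveI : Subsingleton (N.X n) :=
      subsingleton_of_isZero (haN n (le_trans (le_max_right _ _) hn))
    have h2 : ((M.X (n+1)) × (N.X n)) ≃ₗ[A] Cn.X n := e.symm.toLinearEquiv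
    exact h2.symm.toEquiv.subsingleton
  -- the cone is exact
  have hex := core_exact I Cn (fun M' _ _ S => itSmul_eq_bot hNN' S) hproj hbdd hq
  rw [quasiIso_iff_mappingCone_exact]
  intro n
  have r1 : (ComplexShape.up ℤ).Rel n (n+1) := rfl
  have r2 : (ComplexShape.up ℤ).Rel (n-1) n := by show n - 1 + 1 = n; omega
  rw [Cn.exactAt_iff' _ _ _ ((ComplexShape.up ℤ).prev_eq' r2) ((ComplexShape.up ℤ).next_eq' r1),
    ShortComplex.moduleCat_exact_iff]
  intro x hx
  exact hex (n-1) n (by omega) x hx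
end

section
/- Let k be a field, Λ a finite-dimensional k-algebra, and n ≥ 0 an integer. Let V• be a cochain complex of left Λ-modules with V^j = 0 for all j outside the interval [-n, 0] and with every term a finitely generated totally reflexive Λ-module, and let P• be a bounded cochain complex of finitely generated projective left Λ-modules with P^j = 0 for all j > 0. Then for every integer i > n, every morphism in the derived category D(Λ) from V• to P•⟦i⟧ is zero. -/
open CategoryTheory Limits

attribute [local instance] HasDerivedCategory.standard
attribute [local instance] CategoryTheory.hasExt_of_hasDerivedCategory

/-- A left `Λ`-module `V` is totally reflexive if the evaluation map
`V → Hom_{Λᵐᵒᵖ}(Hom_Λ(V,Λ), Λ)`, `v ↦ (f ↦ f v)`, is bijective and `Ext^i_Λ(V, Λ) = 0` and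
`Ext^i_{Λᵐᵒᵖ}(Hom_Λ(V,Λ), Λ) = 0` for all `i > 0`. -/
def IsTotallyReflexive (Λ : Type) [Ring Λ] (V : Type) [AddCommGroup V] [Module Λ V] : Prop :=
  Function.Bijective (fun v : V =>
    ({ toFun := fun f => f v
       map_add' := fun _ _ => rfl
       map_smul' := fun _ _ => rfl } : (V →ₗ[Λ] Λ) →ₗ[Λᵐᵒᵖ] Λ)) ∧
  (∀ i : ℕ, 0 < i →
    Subsingleton (Abelian.Ext (ModuleCat.of Λ V) (ModuleCat.of Λ Λ) i)) ∧
  (∀ i : ℕ, 0 < i →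
    Subsingleton (Abelian.Ext (ModuleCat.of Λᵐᵒᵖ (V →ₗ[Λ] Λ)) (ModuleCat.of Λᵐᵒᵖ Λ) i))

section Helpers

variable {D : Type*} [Category D]

lemma subs_left {A A' B : D} (e : A ≅ A') (h : Subsingleton (A ⟶ B)) :
    Subsingleton (A' ⟶ B) := by
  constructor
  intro f g
  have h1 : e.hom ≫ f = e.hom ≫ g := Subsingleton.elim _ _
  calc f = e.inv ≫ (e.hom ≫ f) := by simp
  _ = e.inv ≫ (e.hom ≫ g) := by rw [h1]
  _ = g := by simp

lemma subs_right {A B B' : D} (e : B ≅ B') (h : Subsingleton (A ⟶ B)) :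
    Subsingleton (A ⟶ B') := by
  constructor
  intro f g
  have h1 : f ≫ e.inv = g ≫ e.inv := Subsingleton.elim _ _
  calc f = (f ≫ e.inv) ≫ e.hom := by simp
  _ = (g ≫ e.inv) ≫ e.hom := by rw [h1]
  _ = g := by simp

lemma subs_tgt_isZero [Limits.HasZeroMorphisms D] {A B : D} (h : IsZero B) :
    Subsingleton (A ⟶ B) :=
  ⟨fun f g => h.eq_of_tgt f g⟩

lemma subs_faithful {C : Type*} [Category C] (F : C ⥤ D) [F.Faithful] {A B : C}
    (h : Subsingleton (F.obj A ⟶ F.obj B)) : Subsingleton (A ⟶ B) :=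
  ⟨fun f g => F.map_injective (Subsingleton.elim _ _)⟩

end Helpers

section Peel

open Pretriangulated

variable {D : Type*} [Category D] [Preadditive D] [HasZeroObject D] [HasShift D ℤ]
  [∀ n : ℤ, (shiftFunctor D n).Additive] [Pretriangulated D]

lemma peel_left {T : Triangle D} (hT : T ∈ distTriang D) {B : D}
    (h1 : Subsingleton (T.obj₁ ⟶ B)) (h3 : Subsingleton (T.obj₃ ⟶ B)) :
    Subsingleton (T.obj₂ ⟶ B) := by
  have key : ∀ f : T.obj₂ ⟶ B, f = 0 := by
    intro f
    obtain ⟨h, hh⟩ := Triangle.yoneda_exact₂ T hT f (Subsingleton.elim _ _)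
    rw [hh, Subsingleton.elim h 0, Limits.comp_zero]
  exact ⟨fun f g => by rw [key f, key g]⟩

lemma peel_right {T : Triangle D} (hT : T ∈ distTriang D) {A : D}
    (h1 : Subsingleton (A ⟶ T.obj₁)) (h3 : Subsingleton (A ⟶ T.obj₃)) :
    Subsingleton (A ⟶ T.obj₂) := by
  have key : ∀ f : A ⟶ T.obj₂, f = 0 := by
    intro f
    obtain ⟨h, hh⟩ := Triangle.coyoneda_exact₂ T hT f (Subsingleton.elim _ _)
    rw [hh, Subsingleton.elim h 0, Limits.zero_comp]
  exact ⟨fun f g => by rw [key f, key g]⟩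

end Peel

section Restr

variable {Λ : Type*} [Ring Λ]

lemma punit_isZero : IsZero (ModuleCat.of Λ PUnit) :=
  ModuleCat.isZero_of_subsingleton _

/-- Brutal restriction of a cochain complex to a set of degrees. -/
noncomputable def restr (X : CochainComplex (ModuleCat Λ) ℤ) (p : ℤ → Prop) [DecidablePred p] :
    CochainComplex (ModuleCat Λ) ℤ where
  X j := if p j then X.X j else ModuleCat.of Λ PUnit
  d j j' := if h : p j ∧ p j' then
      eqToHom (if_pos h.1) ≫ X.d j j' ≫ eqToHom (if_pos h.2).symm else 0
  shape j j' hjj' := by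
    by_cases h : p j ∧ p j'
    · rw [dif_pos h, X.shape j j' hjj']; simp
    · rw [dif_neg h]
  d_comp_d' j j' j'' _ _ := by
    by_cases h1 : p j ∧ p j'
    · by_cases h2 : p j' ∧ p j''
      · rw [dif_pos h1, dif_pos h2]
        simp
      · rw [dif_pos h1, dif_neg h2, comp_zero]
    · rw [dif_neg h1, zero_comp]

lemma restr_isZero (X : CochainComplex (ModuleCat Λ) ℤ) (p : ℤ → Prop) [DecidablePred p]
    (j : ℤ) (h : ¬ p j) : IsZero ((restr X p).X j) := by
  dsimp [restr]
  rw [if_neg h]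
  exact punit_isZero

/-- The eqToIso between the restriction component and the original. -/
noncomputable def restrXIso (X : CochainComplex (ModuleCat Λ) ℤ) (p : ℤ → Prop) [DecidablePred p]
    (j : ℤ) (h : p j) : (restr X p).X j ≅ X.X j :=
  eqToIso (if_pos h)

/-- Inclusion for an up-closed predicate. -/
noncomputable def restrι (X : CochainComplex (ModuleCat Λ) ℤ) (p : ℤ → Prop) [DecidablePred p]
    (hp : ∀ j : ℤ, p j → p (j + 1)) : restr X p ⟶ X where
  f j := if h : p j then eqToHom (if_pos h) else 0
  comm' j j' hj := by
    subst hj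
    by_cases h : p j
    · rw [dif_pos h, dif_pos (hp j h)]
      dsimp [restr]
      rw [dif_pos ⟨h, hp j h⟩]
      simp
    · rw [dif_neg h]
      exact (restr_isZero X p j h).eq_of_src _ _

/-- Projection for a down-closed predicate. -/
noncomputable def restrπ (X : CochainComplex (ModuleCat Λ) ℤ) (p : ℤ → Prop) [DecidablePred p]
    (hp : ∀ j : ℤ, p (j + 1) → p j) : X ⟶ restr X p where
  f j := if h : p j then eqToHom (if_pos h).symm else 0
  comm' j j' hj := by
    subst hj
    by_cases h : p (j + 1)
    · rw [dif_pos h, dif_pos (hp j h)]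
      dsimp [restr]
      rw [dif_pos ⟨hp j h, h⟩]
      simp
    · exact (restr_isZero X p (j + 1) h).eq_of_tgt _ _

/-- The short complex `restr X (c ≤ ·) ⟶ X ⟶ restr X (· < c)`. -/
noncomputable def restrSES (X : CochainComplex (ModuleCat Λ) ℤ) (c : ℤ) :
    ShortComplex (CochainComplex (ModuleCat Λ) ℤ) :=
  ShortComplex.mk (restrι X (fun j => c ≤ j) (fun j hj => by omega))
    (restrπ X (fun j => j < c) (fun j hj => by omega))
    (by
      apply HomologicalComplex.hom_ext
      intro j
      dsimp [restrι, restrπ]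
      by_cases h : c ≤ j
      · rw [dif_pos h, dif_neg (show ¬ j < c by omega)]
        simp
      · rw [dif_neg h]
        simp)

lemma restrSES_shortExact (X : CochainComplex (ModuleCat Λ) ℤ) (c : ℤ) :
    (restrSES X c).ShortExact := by
  apply HomologicalComplex.shortExact_of_degreewise_shortExact
  intro j
  by_cases h : c ≤ j
  · refine ShortComplex.Splitting.shortExact
      { r := eqToHom (if_pos h).symm
        s := 0
        f_r := ?_
        s_g := ?_
        id := ?_ }
    · dsimp [restrSES, restrι]
      simp [dif_pos h]
      exact (eqToHom_trans _ _).trans (eqToHom_refl _ _)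
    · refine (restr_isZero X (fun j => j < c) j (by omega)).eq_of_src _ _
    · dsimp [restrSES, restrι, restrπ]
      simp [dif_pos h, dif_neg (show ¬ j < c by omega)]
      exact (congrArg (_ + ·) Limits.zero_comp).trans ((add_zero _).trans ((eqToHom_trans _ _).trans (eqToHom_refl _ _)))
  · refine ShortComplex.Splitting.shortExact
      { r := 0
        s := eqToHom (if_pos (show j < c by omega))
        f_r := ?_
        s_g := ?_
        id := ?_ }
    · refine (restr_isZero X (fun j => c ≤ j) j h).eq_of_src _ _
    · dsimp [restrSES, restrπ]
      simp [dif_pos (show j < c by omega)]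
      exact (eqToHom_trans _ _).trans (eqToHom_refl _ _)
    · dsimp [restrSES, restrι, restrπ]
      simp [dif_neg h, dif_pos (show j < c by omega)]
      exact (congrArg (· + _) Limits.zero_comp).trans ((zero_add _).trans ((eqToHom_trans _ _).trans (eqToHom_refl _ _)))

end Restr

section DCat

open DerivedCategory Pretriangulated

variable {Λ : Type*} [Ring Λ] [HasDerivedCategory (ModuleCat Λ)]

lemma isIso_of_isZero {C : Type*} [Category C] [HasZeroMorphisms C] {A B : C}
    (hA : IsZero A) (hB : IsZero B) (f : A ⟶ B) : IsIso f :=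
  ⟨0, hA.eq_of_src _ _, hB.eq_of_src _ _⟩

lemma isZero_Q_obj (Y : CochainComplex (ModuleCat Λ) ℤ) (h : ∀ j, IsZero (Y.X j)) :
    IsZero (DerivedCategory.Q.obj Y) := by
  apply Functor.map_isZero
  rw [IsZero.iff_id_eq_zero]
  apply HomologicalComplex.hom_ext
  intro j
  exact (h j).eq_of_src _ _

/-- A complex supported in a single degree is isomorphic in the derived category to the
corresponding single complex. -/
noncomputable def QIsoSingle (Y : CochainComplex (ModuleCat Λ) ℤ) (b : ℤ)
    (h : ∀ j, j ≠ b → IsZero (Y.X j)) :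
    DerivedCategory.Q.obj Y ≅ (DerivedCategory.singleFunctor (ModuleCat Λ) b).obj (Y.X b) := by
  refine ?_ ≪≫ (((SingleFunctors.evaluation _ _ b).mapIso
    (DerivedCategory.singleFunctorsPostcompQIso (ModuleCat Λ))).app (Y.X b)).symm
  let φ : Y ⟶ (HomologicalComplex.single (ModuleCat Λ) (ComplexShape.up ℤ) b).obj (Y.X b) :=
    HomologicalComplex.mkHomToSingle (𝟙 (Y.X b)) (fun i hi => by
      rw [Category.comp_id]
      exact ((h i (by change i + 1 = b at hi; omega)).eq_of_src _ _))
  haveI : ∀ n, IsIso (φ.f n) := by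
    intro n
    by_cases hn : n = b
    · subst hn
      rw [HomologicalComplex.mkHomToSingle_f]
      infer_instance
    · exact isIso_of_isZero (h n hn)
        (HomologicalComplex.isZero_single_obj_X _ b _ n hn) _
  haveI : IsIso φ := HomologicalComplex.Hom.isIso_of_components φ
  exact @asIso _ _ _ _ (DerivedCategory.Q.map φ) ((DerivedCategory.isIso_Q_map_iff_quasiIso (φ := φ)).2 inferInstance)

lemma step1 (A : DerivedCategory (ModuleCat Λ)) (m : ℤ) :
    ∀ (w : ℕ) (Y : CochainComplex (ModuleCat Λ) ℤ) (aY : ℤ)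
      (_ : ∀ j : ℤ, (j < aY ∨ aY + w ≤ j) → IsZero (Y.X j))
      (_ : ∀ b : ℤ, aY ≤ b → b < aY + w →
        Subsingleton (A ⟶ ((DerivedCategory.singleFunctor (ModuleCat Λ) b).obj (Y.X b))⟦m⟧)),
      Subsingleton (A ⟶ (DerivedCategory.Q.obj Y)⟦m⟧) := by
  intro w
  induction w with
  | zero =>
    intro Y aY hsupp _
    refine subs_tgt_isZero (Functor.map_isZero _ (isZero_Q_obj Y (fun j => hsupp j (by omega))))
  | succ w ih =>
    intro Y aY hsupp hsingle
    have hSES := restrSES_shortExact Y (aY + w)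
    have hT := Pretriangulated.Triangle.shift_distinguished _
      (DerivedCategory.triangleOfSES_distinguished hSES) m
    refine peel_right hT ?_ ?_
    · -- obj₁ : (Q.obj (restr Y (aY + w ≤ ·)))⟦m⟧
      show Subsingleton (A ⟶ (DerivedCategory.Q.obj (restr Y (fun j => aY + w ≤ j)))⟦m⟧)
      have hz : ∀ j : ℤ, j ≠ aY + w → IsZero ((restr Y (fun j => aY + w ≤ j)).X j) := by
        intro j hj
        by_cases hj2 : aY + w ≤ j
        · exact IsZero.of_iso (hsupp j (by omega)) (restrXIso Y _ j hj2)
        · exact restr_isZero Y _ j hj2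
      have e : (DerivedCategory.Q.obj (restr Y (fun j => aY + w ≤ j)))⟦m⟧ ≅
          ((DerivedCategory.singleFunctor (ModuleCat Λ) (aY + w)).obj (Y.X (aY + w)))⟦m⟧ :=
        (shiftFunctor _ m).mapIso (QIsoSingle _ _ hz ≪≫
          (DerivedCategory.singleFunctor (ModuleCat Λ) (aY + w)).mapIso
            (restrXIso Y _ (aY + w) (le_refl _)))
      exact subs_right e.symm (hsingle (aY + w) (by omega) (by push_cast; omega))
    · -- obj₃ : (Q.obj (restr Y (· < aY + w)))⟦m⟧
      show Subsingleton (A ⟶ (DerivedCategory.Q.obj (restr Y (fun j => j < aY + w)))⟦m⟧)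
      refine ih (restr Y (fun j => j < aY + w)) aY ?_ ?_
      · intro j hj
        by_cases hj2 : j < aY + w
        · exact IsZero.of_iso (hsupp j (by push_cast; omega)) (restrXIso Y _ j hj2)
        · exact restr_isZero Y _ j hj2
      · intro b hb1 hb2
        have e : ((DerivedCategory.singleFunctor (ModuleCat Λ) b).obj
            ((restr Y (fun j => j < aY + w)).X b))⟦m⟧ ≅
            ((DerivedCategory.singleFunctor (ModuleCat Λ) b).obj (Y.X b))⟦m⟧ :=
          (shiftFunctor _ m).mapIso ((DerivedCategory.singleFunctor (ModuleCat Λ) b).mapIso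
            (restrXIso Y _ b (by omega)))
        exact subs_right e.symm (hsingle b hb1 (by push_cast; omega))

lemma subs_src_isZero {C : Type*} [Category C] [HasZeroMorphisms C] {A B : C} (h : IsZero A) :
    Subsingleton (A ⟶ B) :=
  ⟨fun f g => h.eq_of_src f g⟩

lemma step2 (B : DerivedCategory (ModuleCat Λ)) :
    ∀ (w : ℕ) (X : CochainComplex (ModuleCat Λ) ℤ) (aX : ℤ)
      (_ : ∀ j : ℤ, (j < aX ∨ aX + w ≤ j) → IsZero (X.X j))
      (_ : ∀ j : ℤ, aX ≤ j → j < aX + w →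
        Subsingleton ((DerivedCategory.singleFunctor (ModuleCat Λ) j).obj (X.X j) ⟶ B)),
      Subsingleton (DerivedCategory.Q.obj X ⟶ B) := by
  intro w
  induction w with
  | zero =>
    intro X aX hsupp _
    exact subs_src_isZero (isZero_Q_obj X (fun j => hsupp j (by omega)))
  | succ w ih =>
    intro X aX hsupp hsingle
    have hSES := restrSES_shortExact X (aX + 1)
    have hT := DerivedCategory.triangleOfSES_distinguished hSES
    refine peel_left hT ?_ ?_
    · show Subsingleton (DerivedCategory.Q.obj (restr X (fun j => aX + 1 ≤ j)) ⟶ B)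
      refine ih (restr X (fun j => aX + 1 ≤ j)) (aX + 1) ?_ ?_
      · intro j hj
        by_cases hj2 : aX + 1 ≤ j
        · exact IsZero.of_iso (hsupp j (by push_cast; omega)) (restrXIso X _ j hj2)
        · exact restr_isZero X _ j hj2
      · intro j hj1 hj2
        have e : (DerivedCategory.singleFunctor (ModuleCat Λ) j).obj
            ((restr X (fun j => aX + 1 ≤ j)).X j) ≅
            (DerivedCategory.singleFunctor (ModuleCat Λ) j).obj (X.X j) :=
          (DerivedCategory.singleFunctor (ModuleCat Λ) j).mapIso (restrXIso X _ j hj1)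
        exact subs_left e.symm (hsingle j (by omega) (by push_cast at hj2 ⊢; omega))
    · show Subsingleton (DerivedCategory.Q.obj (restr X (fun j => j < aX + 1)) ⟶ B)
      have hz : ∀ j : ℤ, j ≠ aX → IsZero ((restr X (fun j => j < aX + 1)).X j) := by
        intro j hj
        by_cases hj2 : j < aX + 1
        · exact IsZero.of_iso (hsupp j (by omega)) (restrXIso X _ j hj2)
        · exact restr_isZero X _ j hj2
      have e : DerivedCategory.Q.obj (restr X (fun j => j < aX + 1)) ≅
          (DerivedCategory.singleFunctor (ModuleCat Λ) aX).obj (X.X aX) :=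
        QIsoSingle _ aX hz ≪≫ (DerivedCategory.singleFunctor (ModuleCat Λ) aX).mapIso
          (restrXIso X _ aX (by omega))
      exact subs_left e.symm (hsingle aX (le_refl _) (by push_cast; omega))

end DCat


section ModLevel

open DerivedCategory

variable {Λ : Type*} [Ring Λ] [HasDerivedCategory (ModuleCat Λ)]

lemma vanish_free (A : DerivedCategory (ModuleCat Λ)) (t : ℤ)
    (hΛ : Subsingleton
      (A ⟶ ((DerivedCategory.singleFunctor (ModuleCat Λ) 0).obj (ModuleCat.of Λ Λ))⟦t⟧))
    (r : ℕ) :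
    Subsingleton
      (A ⟶ ((DerivedCategory.singleFunctor (ModuleCat Λ) 0).obj
        (ModuleCat.of Λ (Fin r → Λ)))⟦t⟧) := by
  set G := DerivedCategory.singleFunctor (ModuleCat Λ) 0 ⋙
    shiftFunctor (DerivedCategory (ModuleCat Λ)) t with hG
  have e1 : ModuleCat.of Λ (Fin r → Λ) ≅ ⨁ (fun _ : Fin r => ModuleCat.of Λ Λ) := by
    exact (ModuleCat.biproductIsoPi (fun _ : Fin r => ModuleCat.of Λ Λ)).symm
  have e2 : G.obj (⨁ (fun _ : Fin r => ModuleCat.of Λ Λ)) ≅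
      ⨁ (G.obj ∘ (fun _ : Fin r => ModuleCat.of Λ Λ)) :=
    G.mapBiproduct _
  refine subs_right (G.mapIso e1 ≪≫ e2).symm ?_
  constructor
  intro f g
  apply biproduct.hom_ext
  intro j
  exact @Subsingleton.elim _ hΛ _ _

lemma vanish_proj (A : DerivedCategory (ModuleCat Λ)) (t : ℤ) (N : ModuleCat Λ)
    [Module.Finite Λ N] [Module.Projective Λ N]
    (hΛ : Subsingleton
      (A ⟶ ((DerivedCategory.singleFunctor (ModuleCat Λ) 0).obj (ModuleCat.of Λ Λ))⟦t⟧)) :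
    Subsingleton (A ⟶ ((DerivedCategory.singleFunctor (ModuleCat Λ) 0).obj N)⟦t⟧) := by
  obtain ⟨r, p, hp⟩ := Module.Finite.exists_fin' Λ N
  obtain ⟨s, hs⟩ := Module.projective_lifting_property p LinearMap.id hp
  set G := DerivedCategory.singleFunctor (ModuleCat Λ) 0 ⋙
    shiftFunctor (DerivedCategory (ModuleCat Λ)) t with hG
  have hfree := vanish_free A t hΛ r
  have hsp : (show N ⟶ ModuleCat.of Λ (Fin r → Λ) from ModuleCat.ofHom s) ≫
      (show ModuleCat.of Λ (Fin r → Λ) ⟶ N from ModuleCat.ofHom p) = 𝟙 N := ModuleCat.hom_ext hs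
  constructor
  intro f g
  have h1 : f ≫ G.map (show N ⟶ ModuleCat.of Λ (Fin r → Λ) from ModuleCat.ofHom s) =
      g ≫ G.map (show N ⟶ ModuleCat.of Λ (Fin r → Λ) from ModuleCat.ofHom s) :=
    @Subsingleton.elim _ hfree _ _
  calc f = f ≫ G.map (𝟙 N) := by rw [G.map_id]; exact (Category.comp_id f).symm
  _ = (f ≫ G.map (show N ⟶ ModuleCat.of Λ (Fin r → Λ) from ModuleCat.ofHom s)) ≫
        G.map (show ModuleCat.of Λ (Fin r → Λ) ⟶ N from ModuleCat.ofHom p) := by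
      rw [← hsp, G.map_comp, Category.assoc]
  _ = (g ≫ G.map (show N ⟶ ModuleCat.of Λ (Fin r → Λ) from ModuleCat.ofHom s)) ≫
        G.map (show ModuleCat.of Λ (Fin r → Λ) ⟶ N from ModuleCat.ofHom p) := by rw [h1]
  _ = g ≫ G.map (𝟙 N) := by rw [← hsp, G.map_comp, Category.assoc]
  _ = g := by rw [G.map_id]; exact Category.comp_id g

lemma ext_to_hom (M N : ModuleCat Λ) (t : ℕ) (h : Subsingleton (Abelian.Ext M N t)) :
    Subsingleton ((DerivedCategory.singleFunctor (ModuleCat Λ) 0).obj M ⟶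
      ((DerivedCategory.singleFunctor (ModuleCat Λ) 0).obj N)⟦(t : ℤ)⟧) := by
  haveI := h
  exact Abelian.Ext.homEquiv.symm.subsingleton

lemma homSingleSingle (M N : ModuleCat Λ) (c b m : ℤ) (h : b < c + m)
    (hMN : ∀ t : ℕ, 0 < t →
      Subsingleton ((DerivedCategory.singleFunctor (ModuleCat Λ) 0).obj M ⟶
        ((DerivedCategory.singleFunctor (ModuleCat Λ) 0).obj N)⟦(t : ℤ)⟧)) :
    Subsingleton ((DerivedCategory.singleFunctor (ModuleCat Λ) c).obj M ⟶
      ((DerivedCategory.singleFunctor (ModuleCat Λ) b).obj N)⟦m⟧) := by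
  obtain ⟨t, ht⟩ : ∃ t : ℕ, (t : ℤ) = c + m - b :=
    ⟨(c + m - b).toNat, Int.toNat_of_nonneg (by omega)⟩
  apply subs_faithful (shiftFunctor (DerivedCategory (ModuleCat Λ)) c)
  have e1 : (shiftFunctor (DerivedCategory (ModuleCat Λ)) c).obj
      ((DerivedCategory.singleFunctor (ModuleCat Λ) c).obj M) ≅
      (DerivedCategory.singleFunctor (ModuleCat Λ) 0).obj M :=
    ((DerivedCategory.singleFunctors (ModuleCat Λ)).shiftIso c 0 c (by omega)).app M
  have e2 : (shiftFunctor (DerivedCategory (ModuleCat Λ)) c).obj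
      (((DerivedCategory.singleFunctor (ModuleCat Λ) b).obj N)⟦m⟧) ≅
      ((DerivedCategory.singleFunctor (ModuleCat Λ) 0).obj N)⟦(t : ℤ)⟧ :=
    (shiftFunctorAdd (DerivedCategory (ModuleCat Λ)) m c).symm.app _ ≪≫
      (shiftFunctorAdd' (DerivedCategory (ModuleCat Λ)) b (t : ℤ) (m + c) (by omega)).app _ ≪≫
      (shiftFunctor (DerivedCategory (ModuleCat Λ)) (t : ℤ)).mapIso
        (((DerivedCategory.singleFunctors (ModuleCat Λ)).shiftIso b 0 b (by omega)).app N)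
  exact subs_left e1.symm (subs_right e2.symm (hMN t (by omega)))

end ModLevel

/-- Let `Λ` be a finite-dimensional algebra over a field `k`, let `V` be a
cochain complex concentrated in degrees `[-n, 0]` all of whose terms are finitely generated
totally reflexive left `Λ`-modules, and let `P` be a bounded cochain complex of finitely
generated projective `Λ`-modules with `P^j = 0` for `j > 0`. Then for every integer `i > n`,
every morphism `V ⟶ P⟦i⟧` in the derived category `D(Λ)` is zero. -/
theorem stmt_4 (k : Type) [Field k] (Λ : Type) [Ring Λ] [Algebra k Λ] [FiniteDimensional k Λ]
    (n : ℕ)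
    (V : CochainComplex (ModuleCat Λ) ℤ)
    (hVconc : ∀ j : ℤ, (j < -(n : ℤ) ∨ 0 < j) → IsZero (V.X j))
    (hVfin : ∀ j : ℤ, Module.Finite Λ (V.X j))
    (hVrefl : ∀ j : ℤ, IsTotallyReflexive Λ (V.X j))
    (P : CochainComplex (ModuleCat Λ) ℤ)
    (hPbdd : ∃ a : ℤ, ∀ j : ℤ, j < a → IsZero (P.X j))
    (hPneg : ∀ j : ℤ, 0 < j → IsZero (P.X j))
    (hPfin : ∀ j : ℤ, Module.Finite Λ (P.X j))
    (hPproj : ∀ j : ℤ, Module.Projective Λ (P.X j))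
    (i : ℤ) (hi : (n : ℤ) < i)
    (g : DerivedCategory.Q.obj V ⟶ DerivedCategory.Q.obj (P⟦i⟧)) :
    g = 0 := by
  obtain ⟨a, ha⟩ := hPbdd
  set a1 : ℤ := min a 0 with ha1
  have htoNat : ((1 - a1).toNat : ℤ) = 1 - a1 := Int.toNat_of_nonneg (by omega)
  have hmain : Subsingleton
      (DerivedCategory.Q.obj V ⟶ (DerivedCategory.Q.obj P)⟦i⟧) := by
    apply step2 ((DerivedCategory.Q.obj P)⟦i⟧) (n + 1) V (-(n : ℤ))
    · intro j hj
      apply hVconc j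
      push_cast at hj
      omega
    · intro j hj1 hj2
      apply step1 _ i ((1 - a1).toNat) P a1
      · intro j' hj'
        rcases hj' with h | h
        · exact ha j' (by omega)
        · exact hPneg j' (by omega)
      · intro b hb1 hb2
        apply homSingleSingle
        · push_cast at hj2
          omega
        · intro t ht
          haveI := hPfin b
          haveI := hPproj b
          apply vanish_proj
          exact ext_to_hom _ _ t ((hVrefl j).2.1 t ht)
  have hfin : Subsingleton (DerivedCategory.Q.obj V ⟶ DerivedCategory.Q.obj (P⟦i⟧)) :=
    subs_right ((DerivedCategory.Q.commShiftIso i).app P).symm hmain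
  exact @Subsingleton.elim _ hfin g 0
end
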